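/- Approximate-first-order bound: in a monotone general-sum game with L-smooth utilities, let z* = (x*,y*) be the Nash equilibrium, let z̄ = (x̄,ȳ) ∈ X × Y and γ ∈ (0, 1/(√2·L)]. Define x̂ = Π_X(x̄ + γ∇ₓu₁(x̄,ȳ)), ŷ = Π_Y(ȳ + γ∇ᵧu₂(x̄,ȳ)). Then max_{x∈X, y∈Y} [u₁(x,ŷ) − u₁(x̂,ŷ) + u₂(x̂,y) − u₂(x̂,ŷ)] ≤ (2/γ)·√(D_X² + D_Y²)·‖z̄ − z*‖, where D_X, D_Y bound the diameters of X, Y. -/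

import Mathlib

open scoped RealInnerProductSpace

section AuxLemmas

/-- Cauchy–Schwarz in ℝ². -/
lemma cs2' (a b c d : ℝ) :
    a * c + b * d ≤ Real.sqrt (a ^ 2 + b ^ 2) * Real.sqrt (c ^ 2 + d ^ 2) := by
  rcases le_or_gt (a * c + b * d) 0 with h | h
  · exact h.trans (by positivity)
  · rw [← Real.sqrt_mul (by positivity)]
    apply Real.le_sqrt_of_sq_le
    nlinarith [sq_nonneg (a * d - b * c)]

lemma add_le_sqrt2' (a b : ℝ) : a + b ≤ Real.sqrt 2 * Real.sqrt (a ^ 2 + b ^ 2) := by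
  have h := cs2' a b 1 1
  have h2 : ((1:ℝ) ^ 2 + 1 ^ 2) = 2 := by norm_num
  rw [h2] at h
  linarith [h, mul_comm (Real.sqrt (a ^ 2 + b ^ 2)) (Real.sqrt 2)]

/-- derivative of `t ↦ f (a + t • (b - a))` at `0`. -/
lemma line_hasDerivAt' {E : Type*} [NormedAddCommGroup E] [InnerProductSpace ℝ E] [CompleteSpace E]
    {f : E → ℝ} {g a : E} (hg : HasGradientAt f g a) (b : E) :
    HasDerivAt (fun t : ℝ => f (a + t • (b - a))) ⟪g, b - a⟫ 0 := by
  have h1 : HasDerivAt (fun t : ℝ => a + t • (b - a)) (b - a) 0 := by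
    simpa using ((hasDerivAt_id (0 : ℝ)).smul_const (b - a)).const_add a
  have h2 : HasFDerivAt f (InnerProductSpace.toDual ℝ E g) ((fun t : ℝ => a + t • (b - a)) 0) := by
    simpa using hg.hasFDerivAt
  have := h2.comp_hasDerivAt 0 h1
  simpa [Function.comp_def] using this

lemma grad_le_of_concave' {E : Type*} [NormedAddCommGroup E] [InnerProductSpace ℝ E]
    [CompleteSpace E] {X : Set E} {f : E → ℝ} {g a b : E}
    (ha : a ∈ X) (hb : b ∈ X) (hf : ConcaveOn ℝ X f) (hg : HasGradientAt f g a) :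
    f b - f a ≤ ⟪g, b - a⟫ := by
  set φ : ℝ → ℝ := fun t => f (a + t • (b - a)) with hφ
  have hd : HasDerivAt φ ⟪g, b - a⟫ 0 := line_hasDerivAt' hg b
  have ht : Filter.Tendsto (slope φ 0) (nhdsWithin 0 (Set.Ioi 0)) (nhds ⟪g, b - a⟫) :=
    ((hasDerivAt_iff_tendsto_slope.mp hd).mono_left
      (nhdsWithin_mono _ (fun t ht => Set.mem_compl_singleton_iff.mpr (ne_of_gt ht))))
  refine ge_of_tendsto ht ?_
  filter_upwards [Ioo_mem_nhdsGT (zero_lt_one' ℝ)] with t ht'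
  have hcomb := hf.2 ha hb (by linarith [ht'.2] : (0:ℝ) ≤ 1 - t) (le_of_lt ht'.1) (by ring)
  have hpt : (1 - t) • a + t • b = a + t • (b - a) := by
    rw [sub_smul, one_smul, smul_sub]; abel
  rw [hpt] at hcomb
  have hφ0 : φ 0 = f a := by simp [hφ]
  rw [slope_def_field]
  rw [sub_zero, le_div_iff₀ ht'.1]
  have : (1 - t) * f a + t * f b ≤ φ t := by simpa [smul_eq_mul] using hcomb
  rw [hφ0]; linarith [this]

lemma grad_nonpos_of_max' {E : Type*} [NormedAddCommGroup E] [InnerProductSpace ℝ E]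
    [CompleteSpace E] {X : Set E} (hX : Convex ℝ X) {f : E → ℝ} {g a b : E}
    (ha : a ∈ X) (hb : b ∈ X) (hmax : ∀ w ∈ X, f w ≤ f a) (hg : HasGradientAt f g a) :
    ⟪g, b - a⟫ ≤ 0 := by
  set φ : ℝ → ℝ := fun t => f (a + t • (b - a)) with hφ
  have hd : HasDerivAt φ ⟪g, b - a⟫ 0 := line_hasDerivAt' hg b
  have ht : Filter.Tendsto (slope φ 0) (nhdsWithin 0 (Set.Ioi 0)) (nhds ⟪g, b - a⟫) :=
    ((hasDerivAt_iff_tendsto_slope.mp hd).mono_left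
      (nhdsWithin_mono _ (fun t ht => Set.mem_compl_singleton_iff.mpr (ne_of_gt ht))))
  refine le_of_tendsto ht ?_
  filter_upwards [Ioo_mem_nhdsGT (zero_lt_one' ℝ)] with t ht'
  have hmem : a + t • (b - a) ∈ X :=
    hX.add_smul_sub_mem ha hb ⟨le_of_lt ht'.1, le_of_lt ht'.2⟩
  have hle : φ t ≤ φ 0 := by
    have := hmax _ hmem
    simpa [hφ] using this
  rw [slope_def_field, sub_zero]
  exact div_nonpos_of_nonpos_of_nonneg (by linarith) (le_of_lt ht'.1)

lemma proj_vi' {E : Type*} [NormedAddCommGroup E] [InnerProductSpace ℝ E] [CompleteSpace E]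
    {X : Set E} (hX : Convex ℝ X) {p v : E} (hv : v ∈ X)
    (hmin : ∀ w ∈ X, ‖p - v‖ ≤ ‖p - w‖) : ∀ w ∈ X, ⟪p - v, w - v⟫ ≤ 0 := by
  have hne : Nonempty X := ⟨⟨v, hv⟩⟩
  have heq : ‖p - v‖ = ⨅ w : X, ‖p - w‖ := by
    apply le_antisymm
    · exact le_ciInf fun w => hmin w w.2
    · have hbdd : BddBelow (Set.range fun w : X => ‖p - (w : E)‖) :=
        ⟨0, by rintro _ ⟨w, rfl⟩; exact norm_nonneg _⟩
      exact ciInf_le hbdd ⟨v, hv⟩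
  exact (norm_eq_iInf_iff_real_inner_le_zero hX hv).mp heq

end AuxLemmas

set_option maxHeartbeats 1000000 in
/-- Approximate-first-order bound (Proposition on extragradient-type certificates):
in a monotone general-sum game with `L`-smooth utilities, one projected-gradient step
from `z̄` yields a point `(x̂, ŷ)` whose Nash gap is bounded by
`(2/γ)·√(D_X² + D_Y²)·‖z̄ − z*‖`. -/
theorem approximate_first_order_bound
    {E F : Type*} [NormedAddCommGroup E] [InnerProductSpace ℝ E] [CompleteSpace E]
    [NormedAddCommGroup F] [InnerProductSpace ℝ F] [CompleteSpace F]
    (X : Set E) (Y : Set F) (hXc : Convex ℝ X) (hYc : Convex ℝ Y)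
    (hXcp : IsCompact X) (hYcp : IsCompact Y)
    (DX DY : ℝ)
    (hDX : ∀ a ∈ X, ∀ b ∈ X, dist a b ≤ DX)
    (hDY : ∀ a ∈ Y, ∀ b ∈ Y, dist a b ≤ DY)
    (u₁ u₂ : E × F → ℝ)
    (g₁ : E × F → E) (g₂ : E × F → F)  -- g₁ = ∇ₓu₁, g₂ = ∇ᵧu₂
    (hg₁ : ∀ z : E × F, HasGradientAt (fun x => u₁ (x, z.2)) (g₁ z) z.1)
    (hg₂ : ∀ z : E × F, HasGradientAt (fun y => u₂ (z.1, y)) (g₂ z) z.2)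
    (hu₁_conc : ∀ y : F, ConcaveOn ℝ X (fun x => u₁ (x, y)))
    (hu₂_conc : ∀ x : E, ConcaveOn ℝ Y (fun y => u₂ (x, y)))
    (L : ℝ) (hL : 0 < L)
    -- L-smoothness of the utilities (Lipschitz gradients in the product norm):
    (hLip₁ : ∀ z z' : E × F,
      ‖g₁ z' - g₁ z‖ ≤ L * Real.sqrt (‖z'.1 - z.1‖ ^ 2 + ‖z'.2 - z.2‖ ^ 2))
    (hLip₂ : ∀ z z' : E × F,
      ‖g₂ z' - g₂ z‖ ≤ L * Real.sqrt (‖z'.1 - z.1‖ ^ 2 + ‖z'.2 - z.2‖ ^ 2))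
    -- monotonicity of the game operator F = −(∇ₓu₁, ∇ᵧu₂):
    (hmono : ∀ z, z.1 ∈ X ∧ z.2 ∈ Y → ∀ z' : E × F, z'.1 ∈ X ∧ z'.2 ∈ Y →
      ⟪g₁ z' - g₁ z, z'.1 - z.1⟫ + ⟪g₂ z' - g₂ z, z'.2 - z.2⟫ ≤ 0)
    -- z* = (xs, ys) is the Nash equilibrium:
    (xs : E) (ys : F) (hxs : xs ∈ X) (hys : ys ∈ Y)
    (hNash₁ : ∀ x ∈ X, u₁ (x, ys) ≤ u₁ (xs, ys))
    (hNash₂ : ∀ y ∈ Y, u₂ (xs, y) ≤ u₂ (xs, ys))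
    (γ : ℝ) (hγ0 : 0 < γ) (hγL : γ ≤ 1 / (Real.sqrt 2 * L))
    (xb : E) (yb : F) (hxb : xb ∈ X) (hyb : yb ∈ Y)
    -- x̂ = Π_X(x̄ + γ∇ₓu₁(z̄)), ŷ = Π_Y(ȳ + γ∇ᵧu₂(z̄)) (metric projections):
    (xh : E) (yh : F) (hxh : xh ∈ X) (hyh : yh ∈ Y)
    (hxh_proj : ∀ w ∈ X, ‖xb + γ • g₁ (xb, yb) - xh‖ ≤ ‖xb + γ • g₁ (xb, yb) - w‖)
    (hyh_proj : ∀ w ∈ Y, ‖yb + γ • g₂ (xb, yb) - yh‖ ≤ ‖yb + γ • g₂ (xb, yb) - w‖) :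
    ∀ x ∈ X, ∀ y ∈ Y,
      u₁ (x, yh) - u₁ (xh, yh) + u₂ (xh, y) - u₂ (xh, yh)
        ≤ 2 / γ * Real.sqrt (DX ^ 2 + DY ^ 2)
            * Real.sqrt (‖xb - xs‖ ^ 2 + ‖yb - ys‖ ^ 2) := by
  intro x hxX y hyY
  have key : γ * (Real.sqrt 2 * L) ≤ 1 := by
    rw [le_div_iff₀ (by positivity)] at hγL; exact hγL
  obtain ⟨S, hSdef⟩ : ∃ s : ℝ, s = Real.sqrt (‖xb - xs‖ ^ 2 + ‖yb - ys‖ ^ 2) := ⟨_, rfl⟩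
  obtain ⟨Dd, hDdef⟩ : ∃ s : ℝ, s = Real.sqrt (DX ^ 2 + DY ^ 2) := ⟨_, rfl⟩
  obtain ⟨W, hWdef⟩ : ∃ s : ℝ, s = Real.sqrt (‖xh - xs‖ ^ 2 + ‖yh - ys‖ ^ 2) := ⟨_, rfl⟩
  obtain ⟨H, hHdef⟩ : ∃ s : ℝ, s = Real.sqrt (‖xh - xb‖ ^ 2 + ‖yh - yb‖ ^ 2) := ⟨_, rfl⟩
  rw [← hSdef, ← hDdef]
  have hS0 : 0 ≤ S := hSdef ▸ Real.sqrt_nonneg _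
  have hD0 : 0 ≤ Dd := hDdef ▸ Real.sqrt_nonneg _
  have hW0 : 0 ≤ W := hWdef ▸ Real.sqrt_nonneg _
  have hH0 : 0 ≤ H := hHdef ▸ Real.sqrt_nonneg _
  have hS2 : S ^ 2 = ‖xb - xs‖ ^ 2 + ‖yb - ys‖ ^ 2 := by
    rw [hSdef]; exact Real.sq_sqrt (by positivity)
  have hW2 : W ^ 2 = ‖xh - xs‖ ^ 2 + ‖yh - ys‖ ^ 2 := by
    rw [hWdef]; exact Real.sq_sqrt (by positivity)
  have hH2 : H ^ 2 = ‖xh - xb‖ ^ 2 + ‖yh - yb‖ ^ 2 := by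
    rw [hHdef]; exact Real.sq_sqrt (by positivity)
  -- Nash variational inequalities
  have nash1 : ∀ b ∈ X, ⟪g₁ (xs, ys), b - xs⟫ ≤ 0 := fun b hb =>
    grad_nonpos_of_max' hXc hxs hb hNash₁ (hg₁ (xs, ys))
  have nash2 : ∀ b ∈ Y, ⟪g₂ (xs, ys), b - ys⟫ ≤ 0 := fun b hb =>
    grad_nonpos_of_max' hYc hys hb hNash₂ (hg₂ (xs, ys))
  -- concavity first-order bounds
  have G1 : u₁ (x, yh) - u₁ (xh, yh) ≤ ⟪g₁ (xh, yh), x - xh⟫ :=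
    grad_le_of_concave' hxh hxX (hu₁_conc yh) (hg₁ (xh, yh))
  have G2 : u₂ (xh, y) - u₂ (xh, yh) ≤ ⟪g₂ (xh, yh), y - yh⟫ :=
    grad_le_of_concave' hyh hyY (hu₂_conc xh) (hg₂ (xh, yh))
  -- projection variational inequalities at z*
  have pvX := proj_vi' hXc hxh hxh_proj xs hxs
  have pvY := proj_vi' hYc hyh hyh_proj ys hys
  have pv1 : ⟪xb - xh, xs - xh⟫ + γ * ⟪g₁ (xb, yb), xs - xh⟫ ≤ 0 := by
    have e : xb + γ • g₁ (xb, yb) - xh = (xb - xh) + γ • g₁ (xb, yb) := by abel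
    rw [e, inner_add_left, real_inner_smul_left] at pvX; exact pvX
  have pv2 : ⟪yb - yh, ys - yh⟫ + γ * ⟪g₂ (xb, yb), ys - yh⟫ ≤ 0 := by
    have e : yb + γ • g₂ (xb, yb) - yh = (yb - yh) + γ • g₂ (xb, yb) := by abel
    rw [e, inner_add_left, real_inner_smul_left] at pvY; exact pvY
  -- polarization identities
  have idX : 2 * ⟪xb - xh, xs - xh⟫ = ‖xh - xb‖ ^ 2 + ‖xh - xs‖ ^ 2 - ‖xb - xs‖ ^ 2 := by
    have h := norm_sub_sq_real (xb - xh) (xs - xh)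
    have e : xb - xh - (xs - xh) = xb - xs := by abel
    rw [e, norm_sub_rev xb xh, norm_sub_rev xs xh] at h
    linarith
  have idY : 2 * ⟪yb - yh, ys - yh⟫ = ‖yh - yb‖ ^ 2 + ‖yh - ys‖ ^ 2 - ‖yb - ys‖ ^ 2 := by
    have h := norm_sub_sq_real (yb - yh) (ys - yh)
    have e : yb - yh - (ys - yh) = yb - ys := by abel
    rw [e, norm_sub_rev yb yh, norm_sub_rev ys yh] at h
    linarith
  -- firm inequality, componentwise
  have nh1 : ⟪g₁ (xs, ys), xh - xs⟫ ≤ 0 := nash1 xh hxh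
  have nh2 : ⟪g₂ (xs, ys), yh - ys⟫ ≤ 0 := nash2 yh hyh
  have firmX : ‖xh - xs‖ ^ 2 ≤ ⟪(xb - xs) + γ • (g₁ (xb, yb) - g₁ (xs, ys)), xh - xs⟫ := by
    have e2 : xs - xh = -(xh - xs) := by abel
    have h1 := pv1
    rw [e2, inner_neg_right, inner_neg_right] at h1
    have e3 : xb - xh = (xb - xs) - (xh - xs) := by abel
    rw [e3, inner_sub_left, real_inner_self_eq_norm_sq] at h1
    have h2 : γ * ⟪g₁ (xs, ys), xh - xs⟫ ≤ 0 := by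
      have := mul_le_mul_of_nonneg_left nh1 hγ0.le
      simpa using this
    have expand : ⟪xb - xs + γ • (g₁ (xb, yb) - g₁ (xs, ys)), xh - xs⟫
        = ⟪xb - xs, xh - xs⟫ + γ * ⟪g₁ (xb, yb), xh - xs⟫ - γ * ⟪g₁ (xs, ys), xh - xs⟫ := by
      rw [inner_add_left, real_inner_smul_left, inner_sub_left, inner_sub_left]; ring
    rw [expand]
    linarith only [h1, h2]
  have firmY : ‖yh - ys‖ ^ 2 ≤ ⟪(yb - ys) + γ • (g₂ (xb, yb) - g₂ (xs, ys)), yh - ys⟫ := by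
    have e2 : ys - yh = -(yh - ys) := by abel
    have h1 := pv2
    rw [e2, inner_neg_right, inner_neg_right] at h1
    have e3 : yb - yh = (yb - ys) - (yh - ys) := by abel
    rw [e3, inner_sub_left, real_inner_self_eq_norm_sq] at h1
    have h2 : γ * ⟪g₂ (xs, ys), yh - ys⟫ ≤ 0 := by
      have := mul_le_mul_of_nonneg_left nh2 hγ0.le
      simpa using this
    have expand : ⟪yb - ys + γ • (g₂ (xb, yb) - g₂ (xs, ys)), yh - ys⟫
        = ⟪yb - ys, yh - ys⟫ + γ * ⟪g₂ (xb, yb), yh - ys⟫ - γ * ⟪g₂ (xs, ys), yh - ys⟫ := by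
      rw [inner_add_left, real_inner_smul_left, inner_sub_left, inner_sub_left]; ring
    rw [expand]
    linarith only [h1, h2]
  have fX : ‖xh - xs‖ ^ 2 ≤ ‖(xb - xs) + γ • (g₁ (xb, yb) - g₁ (xs, ys))‖ * ‖xh - xs‖ :=
    firmX.trans (real_inner_le_norm _ _)
  have fY : ‖yh - ys‖ ^ 2 ≤ ‖(yb - ys) + γ • (g₂ (xb, yb) - g₂ (xs, ys))‖ * ‖yh - ys‖ :=
    firmY.trans (real_inner_le_norm _ _)
  -- expansion of the shifted norms
  have axsq : ‖(xb - xs) + γ • (g₁ (xb, yb) - g₁ (xs, ys))‖ ^ 2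
      = ‖xb - xs‖ ^ 2 + 2 * (γ * ⟪g₁ (xb, yb) - g₁ (xs, ys), xb - xs⟫)
        + γ ^ 2 * ‖g₁ (xb, yb) - g₁ (xs, ys)‖ ^ 2 := by
    rw [norm_add_sq_real, real_inner_smul_right, real_inner_comm (xb - xs), norm_smul,
      Real.norm_eq_abs, mul_pow, sq_abs]
  have aysq : ‖(yb - ys) + γ • (g₂ (xb, yb) - g₂ (xs, ys))‖ ^ 2
      = ‖yb - ys‖ ^ 2 + 2 * (γ * ⟪g₂ (xb, yb) - g₂ (xs, ys), yb - ys⟫)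
        + γ ^ 2 * ‖g₂ (xb, yb) - g₂ (xs, ys)‖ ^ 2 := by
    rw [norm_add_sq_real, real_inner_smul_right, real_inner_comm (yb - ys), norm_smul,
      Real.norm_eq_abs, mul_pow, sq_abs]
  -- monotonicity between z̄ and z*
  have mono1 : ⟪g₁ (xb, yb) - g₁ (xs, ys), xb - xs⟫ + ⟪g₂ (xb, yb) - g₂ (xs, ys), yb - ys⟫ ≤ 0 := by
    simpa using hmono (xs, ys) ⟨hxs, hys⟩ (xb, yb) ⟨hxb, hyb⟩
  -- Lipschitz facts
  have lipS1 : ‖g₁ (xb, yb) - g₁ (xs, ys)‖ ≤ L * S := by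
    rw [hSdef]; simpa using hLip₁ (xs, ys) (xb, yb)
  have lipS2 : ‖g₂ (xb, yb) - g₂ (xs, ys)‖ ≤ L * S := by
    rw [hSdef]; simpa using hLip₂ (xs, ys) (xb, yb)
  have lipW1 : ‖g₁ (xh, yh) - g₁ (xs, ys)‖ ≤ L * W := by
    rw [hWdef]; simpa using hLip₁ (xs, ys) (xh, yh)
  have lipW2 : ‖g₂ (xh, yh) - g₂ (xs, ys)‖ ≤ L * W := by
    rw [hWdef]; simpa using hLip₂ (xs, ys) (xh, yh)
  have lipH1 : ‖g₁ (xh, yh) - g₁ (xb, yb)‖ ≤ L * H := by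
    rw [hHdef]; simpa using hLip₁ (xb, yb) (xh, yh)
  have lipH2 : ‖g₂ (xh, yh) - g₂ (xb, yb)‖ ≤ L * H := by
    rw [hHdef]; simpa using hLip₂ (xb, yb) (xh, yh)
  -- 2 γ² L² ≤ 1
  have hs2 : Real.sqrt 2 ^ 2 = 2 := Real.sq_sqrt (by norm_num)
  have h2γL : 2 * (γ ^ 2 * L ^ 2) ≤ 1 := by
    have h0 : 0 ≤ γ * (Real.sqrt 2 * L) := by positivity
    have hm := mul_self_le_mul_self h0 key
    have e : γ * (Real.sqrt 2 * L) * (γ * (Real.sqrt 2 * L)) = Real.sqrt 2 ^ 2 * (γ ^ 2 * L ^ 2) := by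
      ring
    rw [e, hs2] at hm
    linarith only [hm]
  -- bound on the product norm of z̄ - z* + γ ΔG
  have hd1sq : ‖g₁ (xb, yb) - g₁ (xs, ys)‖ ^ 2 ≤ L ^ 2 * S ^ 2 := by
    have := mul_self_le_mul_self (norm_nonneg (g₁ (xb, yb) - g₁ (xs, ys))) lipS1
    linarith only [this]
  have hd2sq : ‖g₂ (xb, yb) - g₂ (xs, ys)‖ ^ 2 ≤ L ^ 2 * S ^ 2 := by
    have := mul_self_le_mul_self (norm_nonneg (g₂ (xb, yb) - g₂ (xs, ys))) lipS2
    linarith only [this]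
  have m1 : γ * (⟪g₁ (xb, yb) - g₁ (xs, ys), xb - xs⟫ + ⟪g₂ (xb, yb) - g₂ (xs, ys), yb - ys⟫) ≤ 0 := by
    have := mul_le_mul_of_nonneg_left mono1 hγ0.le
    simpa using this
  have m2 : γ ^ 2 * (‖g₁ (xb, yb) - g₁ (xs, ys)‖ ^ 2 + ‖g₂ (xb, yb) - g₂ (xs, ys)‖ ^ 2)
      ≤ γ ^ 2 * (2 * (L ^ 2 * S ^ 2)) :=
    mul_le_mul_of_nonneg_left (by linarith) (sq_nonneg γ)
  have m3 : γ ^ 2 * (2 * (L ^ 2 * S ^ 2)) ≤ S ^ 2 := by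
    have := mul_le_mul_of_nonneg_right h2γL (sq_nonneg S)
    linarith only [this]
  have hPle : ‖(xb - xs) + γ • (g₁ (xb, yb) - g₁ (xs, ys))‖ ^ 2
      + ‖(yb - ys) + γ • (g₂ (xb, yb) - g₂ (xs, ys))‖ ^ 2 ≤ 2 * S ^ 2 := by
    rw [axsq, aysq]
    linarith only [m1, m2, m3, hS2]
  -- W ≤ √2 S
  have fire : W ^ 2 ≤ Real.sqrt (‖(xb - xs) + γ • (g₁ (xb, yb) - g₁ (xs, ys))‖ ^ 2
      + ‖(yb - ys) + γ • (g₂ (xb, yb) - g₂ (xs, ys))‖ ^ 2) * W := by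
    have c := cs2' ‖(xb - xs) + γ • (g₁ (xb, yb) - g₁ (xs, ys))‖
      ‖(yb - ys) + γ • (g₂ (xb, yb) - g₂ (xs, ys))‖ ‖xh - xs‖ ‖yh - ys‖
    rw [← hWdef] at c
    linarith only [fX, fY, c, hW2]
  have hWS : W ≤ Real.sqrt 2 * S := by
    have hm : Real.sqrt (‖(xb - xs) + γ • (g₁ (xb, yb) - g₁ (xs, ys))‖ ^ 2
        + ‖(yb - ys) + γ • (g₂ (xb, yb) - g₂ (xs, ys))‖ ^ 2) ≤ Real.sqrt 2 * S := by
      have h := Real.sqrt_le_sqrt hPle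
      rwa [Real.sqrt_mul (by norm_num : (0:ℝ) ≤ 2), Real.sqrt_sq hS0] at h
    rcases eq_or_lt_of_le hW0 with h0 | h0
    · rw [← h0]; positivity
    · have h1 := mul_le_mul_of_nonneg_right hm hW0
      have h2 : W * W ≤ (Real.sqrt 2 * S) * W := by linarith only [fire, h1]
      exact le_of_mul_le_mul_right h2 h0
  -- diameter facts
  have hxDX : ‖x - xs‖ ≤ DX := by have := hDX x hxX xs hxs; rwa [dist_eq_norm] at this
  have hyDY : ‖y - ys‖ ≤ DY := by have := hDY y hyY ys hys; rwa [dist_eq_norm] at this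
  have hsxDX : ‖xb - xs‖ ≤ DX := by have := hDX xb hxb xs hxs; rwa [dist_eq_norm] at this
  have hsyDY : ‖yb - ys‖ ≤ DY := by have := hDY yb hyb ys hys; rwa [dist_eq_norm] at this
  have hSD : S ≤ Dd := by
    rw [hSdef, hDdef]
    apply Real.sqrt_le_sqrt
    have h1 := mul_self_le_mul_self (norm_nonneg (xb - xs)) hsxDX
    have h2 := mul_self_le_mul_self (norm_nonneg (yb - ys)) hsyDY
    linarith only [h1, h2]
  -- B bounds
  have hB1 : ⟪g₁ (xh, yh) - g₁ (xs, ys), x - xs⟫ ≤ (L * W) * DX :=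
    (real_inner_le_norm _ _).trans
      (mul_le_mul lipW1 hxDX (norm_nonneg _) (mul_nonneg hL.le hW0))
  have hB2 : ⟪g₂ (xh, yh) - g₂ (xs, ys), y - ys⟫ ≤ (L * W) * DY :=
    (real_inner_le_norm _ _).trans
      (mul_le_mul lipW2 hyDY (norm_nonneg _) (mul_nonneg hL.le hW0))
  -- D bounds
  have hDt1 : ⟪g₁ (xh, yh) - g₁ (xb, yb), xs - xh⟫ ≤ (L * H) * ‖xh - xs‖ := by
    have h := real_inner_le_norm (g₁ (xh, yh) - g₁ (xb, yb)) (xs - xh)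
    rw [norm_sub_rev xs xh] at h
    exact h.trans (mul_le_mul_of_nonneg_right lipH1 (norm_nonneg _))
  have hDt2 : ⟪g₂ (xh, yh) - g₂ (xb, yb), ys - yh⟫ ≤ (L * H) * ‖yh - ys‖ := by
    have h := real_inner_le_norm (g₂ (xh, yh) - g₂ (xb, yb)) (ys - yh)
    rw [norm_sub_rev ys yh] at h
    exact h.trans (mul_le_mul_of_nonneg_right lipH2 (norm_nonneg _))
  -- decomposition of the gradient terms
  have d1 : ⟪g₁ (xh, yh), x - xh⟫
      = ⟪g₁ (xh, yh) - g₁ (xs, ys), x - xs⟫ + ⟪g₁ (xs, ys), x - xs⟫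
        + (⟪g₁ (xh, yh) - g₁ (xb, yb), xs - xh⟫ + ⟪g₁ (xb, yb), xs - xh⟫) := by
    have e : x - xh = (x - xs) + (xs - xh) := by abel
    rw [e, inner_add_right, inner_sub_left, inner_sub_left]; ring
  have d2 : ⟪g₂ (xh, yh), y - yh⟫
      = ⟪g₂ (xh, yh) - g₂ (xs, ys), y - ys⟫ + ⟪g₂ (xs, ys), y - ys⟫
        + (⟪g₂ (xh, yh) - g₂ (xb, yb), ys - yh⟫ + ⟪g₂ (xb, yb), ys - yh⟫) := by
    have e : y - yh = (y - ys) + (ys - yh) := by abel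
    rw [e, inner_add_right, inner_sub_left, inner_sub_left]; ring
  have hC1 : ⟪g₁ (xs, ys), x - xs⟫ ≤ 0 := nash1 x hxX
  have hC2 : ⟪g₂ (xs, ys), y - ys⟫ ≤ 0 := nash2 y hyY
  -- E term
  have hE : γ * ⟪g₁ (xb, yb), xs - xh⟫ + γ * ⟪g₂ (xb, yb), ys - yh⟫
      ≤ (S ^ 2 - H ^ 2 - W ^ 2) / 2 := by
    linarith only [pv1, pv2, idX, idY, hS2, hH2, hW2]
  -- sum bounds
  have hDXDY : DX + DY ≤ Real.sqrt 2 * Dd := by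
    rw [hDdef]; exact add_le_sqrt2' DX DY
  have sumB : ⟪g₁ (xh, yh) - g₁ (xs, ys), x - xs⟫ + ⟪g₂ (xh, yh) - g₂ (xs, ys), y - ys⟫
      ≤ L * W * (Real.sqrt 2 * Dd) := by
    have h := mul_le_mul_of_nonneg_left hDXDY (mul_nonneg hL.le hW0)
    linarith only [hB1, hB2, h]
  have hwsum : ‖xh - xs‖ + ‖yh - ys‖ ≤ Real.sqrt 2 * W := by
    rw [hWdef]; exact add_le_sqrt2' _ _
  have sumD : ⟪g₁ (xh, yh) - g₁ (xb, yb), xs - xh⟫ + ⟪g₂ (xh, yh) - g₂ (xb, yb), ys - yh⟫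
      ≤ L * H * (Real.sqrt 2 * W) := by
    have h := mul_le_mul_of_nonneg_left hwsum (mul_nonneg hL.le hH0)
    linarith only [hDt1, hDt2, h]
  -- γ-scaled bounds
  have tB : γ * (L * W * (Real.sqrt 2 * Dd)) ≤ W * Dd := by
    have h := mul_le_mul_of_nonneg_right key (mul_nonneg hW0 hD0)
    linarith only [h]
  have tD : γ * (L * H * (Real.sqrt 2 * W)) ≤ H * W := by
    have h := mul_le_mul_of_nonneg_right key (mul_nonneg hH0 hW0)
    linarith only [h]
  have q1 : γ * (⟪g₁ (xh, yh) - g₁ (xs, ys), x - xs⟫ + ⟪g₂ (xh, yh) - g₂ (xs, ys), y - ys⟫)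
      ≤ W * Dd := (mul_le_mul_of_nonneg_left sumB hγ0.le).trans tB
  have q2 : γ * (⟪g₁ (xs, ys), x - xs⟫ + ⟪g₂ (xs, ys), y - ys⟫) ≤ 0 := by
    have h := mul_le_mul_of_nonneg_left (show ⟪g₁ (xs, ys), x - xs⟫ + ⟪g₂ (xs, ys), y - ys⟫ ≤ 0 by
      linarith only [hC1, hC2]) hγ0.le
    simpa using h
  have q3 : γ * (⟪g₁ (xh, yh) - g₁ (xb, yb), xs - xh⟫ + ⟪g₂ (xh, yh) - g₂ (xb, yb), ys - yh⟫)
      ≤ H * W := (mul_le_mul_of_nonneg_left sumD hγ0.le).trans tD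
  -- put everything together
  have dI : γ * (⟪g₁ (xh, yh), x - xh⟫ + ⟪g₂ (xh, yh), y - yh⟫)
      = γ * (⟪g₁ (xh, yh) - g₁ (xs, ys), x - xs⟫ + ⟪g₂ (xh, yh) - g₂ (xs, ys), y - ys⟫)
        + γ * (⟪g₁ (xs, ys), x - xs⟫ + ⟪g₂ (xs, ys), y - ys⟫)
        + γ * (⟪g₁ (xh, yh) - g₁ (xb, yb), xs - xh⟫ + ⟪g₂ (xh, yh) - g₂ (xb, yb), ys - yh⟫)
        + (γ * ⟪g₁ (xb, yb), xs - xh⟫ + γ * ⟪g₂ (xb, yb), ys - yh⟫) := by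
    rw [d1, d2]; ring
  have big : γ * (⟪g₁ (xh, yh), x - xh⟫ + ⟪g₂ (xh, yh), y - yh⟫)
      ≤ W * Dd + H * W + (S ^ 2 - H ^ 2 - W ^ 2) / 2 := by
    rw [dI]; linarith only [q1, q2, q3, hE]
  have step1 : γ * (u₁ (x, yh) - u₁ (xh, yh) + u₂ (xh, y) - u₂ (xh, yh))
      ≤ γ * (⟪g₁ (xh, yh), x - xh⟫ + ⟪g₂ (xh, yh), y - yh⟫) :=
    mul_le_mul_of_nonneg_left (by linarith only [G1, G2]) hγ0.le
  -- endgame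
  have hs32 : Real.sqrt 2 ≤ 3 / 2 := by
    nlinarith only [hs2, Real.sqrt_nonneg 2]
  have p1 : W * Dd ≤ (Real.sqrt 2 * S) * Dd := mul_le_mul_of_nonneg_right hWS hD0
  have p2 : (Real.sqrt 2 * S) * Dd ≤ 3 / 2 * (S * Dd) := by
    have h := mul_le_mul_of_nonneg_right hs32 (mul_nonneg hS0 hD0)
    linarith only [h]
  have p3 : H * W ≤ H ^ 2 / 2 + W ^ 2 / 2 := by linarith only [sq_nonneg (H - W)]
  have p4 : S ^ 2 ≤ S * Dd := by linarith only [mul_le_mul_of_nonneg_left hSD hS0]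
  have final : γ * (u₁ (x, yh) - u₁ (xh, yh) + u₂ (xh, y) - u₂ (xh, yh)) ≤ 2 * Dd * S := by
    linarith only [step1, big, p1, p2, p3, p4]
  rw [show 2 / γ * Dd * S = 2 * Dd * S / γ by ring, le_div_iff₀ hγ0]
  linarith only [final]
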